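/- For n ≥ 2, the pure virtual twin group PVT_n is an irreducible right-angled Artin group: it cannot be written as a direct product of two non-trivial subgroups. -/

import Mathlib

set_option linter.unusedSectionVars false
set_option maxHeartbeats 1000000

open Monoid PushoutI

namespace VTG

open scoped commutatorElement

open scoped Classical

/-- Vertices `λ_{i,j}`, `1 ≤ i < j ≤ n`, indexed by pairs of `Fin n`. -/
abbrev Vtx (n : ℕ) := {p : Fin n × Fin n // p.1 < p.2}

/-- Two vertices `λ_{i,j}` and `λ_{k,l}` have disjoint index sets, i.e. `i,j,k,l` are
four distinct integers. -/
abbrev DisjV {n : ℕ} (p q : Vtx n) : Prop :=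
  p.1.1 ≠ q.1.1 ∧ p.1.1 ≠ q.1.2 ∧ p.1.2 ≠ q.1.1 ∧ p.1.2 ≠ q.1.2

/-- The right-angled Artin relations for `PVT_n`: the generators `λ_{i,j}` and `λ_{k,l}`
commute whenever `i, j, k, l` are four distinct integers. -/
def raagRels (n : ℕ) : Set (FreeGroup (Vtx n)) :=
  { w | ∃ p q : Vtx n, DisjV p q ∧ w = ⁅FreeGroup.of p, FreeGroup.of q⁆ }

section Amalgam

variable {ι : Type*} [DecidableEq ι] {G : ι → Type*} [∀ i, Group (G i)]
  {H : Type*} [Group H] {φ : ∀ i, H →* G i}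

def mprod (φ : ∀ i, H →* G i) (l : List (Σ i, G i)) : PushoutI φ :=
  (l.map fun p => of (φ := φ) p.1 p.2).prod

def Alt (φ : ∀ i, H →* G i) (l : List (Σ i, G i)) : Prop :=
  l.Chain' (fun a b => a.1 ≠ b.1) ∧ ∀ p ∈ l, p.2 ∉ (φ p.1).range

def revInv (l : List (Σ i, G i)) : List (Σ i, G i) :=
  l.reverse.map fun p => ⟨p.1, p.2⁻¹⟩

lemma mprod_nil : mprod φ [] = 1 := rfl

lemma mprod_cons {p : (Σ i, G i)} {l : List (Σ i, G i)} :
    mprod φ (p :: l) = of (φ := φ) p.1 p.2 * mprod φ l := by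
  simp [mprod]

lemma mprod_append {l₁ l₂ : List (Σ i, G i)} :
    mprod φ (l₁ ++ l₂) = mprod φ l₁ * mprod φ l₂ := by
  simp [mprod]

lemma mprod_revInv {l : List (Σ i, G i)} : mprod φ (revInv l) = (mprod φ l)⁻¹ := by
  induction l with
  | nil => simp [revInv, mprod]
  | cons p l ih =>
      have : revInv (p :: l) = revInv l ++ [⟨p.1, p.2⁻¹⟩] := by simp [revInv]
      rw [this, mprod_append, ih, mprod_cons, mprod_cons, mprod_nil]
      simp [mul_inv_rev]

lemma Alt.tail {p : (Σ i, G i)} {l : List (Σ i, G i)} (h : Alt φ (p :: l)) : Alt φ l :=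
  ⟨h.1.tail, fun q hq => h.2 q (List.mem_cons_of_mem _ hq)⟩

lemma one_mem_range (i : ι) : (1 : G i) ∈ (φ i).range := ⟨1, map_one _⟩

lemma inv_notin_range {i : ι} {a : G i} (h : a ∉ (φ i).range) : a⁻¹ ∉ (φ i).range :=
  fun hh => h ((inv_mem_iff (H := (φ i).range)).1 hh)

lemma mul_notin_range_left {i : ι} {b : G i} (hb : b ∉ (φ i).range) (h : H) :
    φ i h * b ∉ (φ i).range := by
  rintro ⟨h', hh⟩
  exact hb ⟨h⁻¹ * h', by rw [map_mul, hh, map_inv]; group⟩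

lemma mul_notin_range_right {i : ι} {a : G i} (ha : a ∉ (φ i).range) (h : H) :
    a * φ i h ∉ (φ i).range := by
  rintro ⟨h', hh⟩
  exact ha ⟨h' * h⁻¹, by rw [map_mul, hh, map_inv]; group⟩

lemma Alt.revInv {l : List (Σ i, G i)} (h : Alt φ l) : Alt φ (VTG.revInv l) := by
  constructor
  · dsimp only [List.Chain']
    rw [VTG.revInv, List.isChain_map, List.isChain_reverse]
    exact h.1.imp (fun a b hab => by exact fun hh => hab hh.symm)
  · intro p hp
    rw [VTG.revInv, List.mem_map] at hp
    rcases hp with ⟨q, hq, rfl⟩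
    exact inv_notin_range (h.2 q (List.mem_reverse.1 hq))

lemma alt_prod_notin_base (hφ : ∀ i, Function.Injective (φ i))
    {l : List (Σ i, G i)} (hl : Alt φ l) (hne : l ≠ []) :
    mprod φ l ∉ (base φ).range := by
  intro hmem
  have hne1 : ∀ p ∈ l, Sigma.snd p ≠ 1 := by
    intro p hp h1
    exact hl.2 p hp (h1 ▸ one_mem_range p.1)
  let w : CoprodI.Word G := ⟨l, hne1, hl.1⟩
  have hred : Reduced φ w := by
    intro p hp
    exact hl.2 p hp
  have hprod : ofCoprodI (φ := φ) w.prod = mprod φ l := by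
    show ofCoprodI (List.prod (l.map fun p => CoprodI.of p.snd)) = _
    rw [map_list_prod, List.map_map]
    simp only [mprod, Function.comp_def, ofCoprodI_of]
  have := hred.eq_empty_of_mem_range hφ (by rw [hprod]; exact hmem)
  apply hne
  simpa [w, CoprodI.Word.empty] using congrArg CoprodI.Word.toList this

lemma alt_prod_notin_of_range (hφ : ∀ i, Function.Injective (φ i)) (i₀ : ι)
    {p : (Σ i, G i)} {l : List (Σ i, G i)} (hl : Alt φ (p :: l)) (hp : p.1 ≠ i₀) :
    mprod φ (p :: l) ∉ (of (φ := φ) i₀).range := by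
  rintro ⟨c, hc⟩
  by_cases hcr : c ∈ (φ i₀).range
  · rcases hcr with ⟨h, rfl⟩
    refine alt_prod_notin_base hφ hl (by simp) ?_
    rw [← hc, of_apply_eq_base]
    exact ⟨h, rfl⟩
  · have halt : Alt φ (⟨i₀, c⁻¹⟩ :: p :: l) := by
      refine ⟨hl.1.cons ?_, ?_⟩
      · intro q hq
        simp only [List.head?_cons, Option.mem_def, Option.some.injEq] at hq
        subst hq
        exact fun h => hp h.symm
      · intro q hq
        rcases List.mem_cons.1 hq with rfl | hq
        · exact inv_notin_range hcr
        · exact hl.2 q hq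
    refine alt_prod_notin_base hφ halt (by simp) ?_
    rw [mprod_cons, ← hc]
    simp only [map_inv]
    rw [inv_mul_cancel]
    exact ⟨1, map_one _⟩

lemma alt_prod_mem_of_range (hφ : ∀ i, Function.Injective (φ i)) (i₀ : ι)
    {l : List (Σ i, G i)} (hl : Alt φ l)
    (h : mprod φ l ∈ (of (φ := φ) i₀).range) :
    l = [] ∨ ∃ a : G i₀, l = [⟨i₀, a⟩] := by
  rcases l with _ | ⟨⟨pi, pa⟩, rest⟩
  · exact Or.inl rfl
  by_cases hp : pi = i₀
  · subst hp
    rcases rest with _ | ⟨q, rest'⟩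
    · exact Or.inr ⟨pa, rfl⟩
    · exfalso
      have hq : q.1 ≠ pi := by
        have hchain := (List.isChain_cons_cons.1 hl.1).1
        exact fun hh => hchain hh.symm
      rcases h with ⟨c, hc⟩
      refine alt_prod_notin_of_range hφ pi hl.tail hq ⟨pa⁻¹ * c, ?_⟩
      rw [map_mul, hc, mprod_cons, map_inv]
      simp
  · exact absurd h (alt_prod_notin_of_range hφ i₀ hl hp)

/-- key sandwich lemma : conjugating a non-base letter by an alternating word starting at
an index different from the letter's index gives something not in `(of i₀).range`. -/
lemma sandwich_notin (hφ : ∀ i, Function.Injective (φ i)) (i₀ : ι)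
    {q : (Σ i, G i)} {rest : List (Σ i, G i)} (hl : Alt φ (q :: rest)) (hq : q.1 ≠ i₀)
    {x' : G i₀} (hx' : x' ∉ (φ i₀).range) :
    (mprod φ (q :: rest))⁻¹ * of (φ := φ) i₀ x' * mprod φ (q :: rest) ∉
      (of (φ := φ) i₀).range := by
  intro hmem
  set l : List (Σ i, G i) := q :: rest with hldef
  have haltL : Alt φ (revInv l ++ ⟨i₀, x'⟩ :: l) := by
    constructor
    · dsimp only [List.Chain']
      rw [List.isChain_append]
      refine ⟨hl.revInv.1, (hl.1.cons ?_), ?_⟩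
      · intro p hp
        rw [hldef, List.head?_cons, Option.mem_def, Option.some.injEq] at hp
        subst hp
        exact fun hh => hq hh.symm
      · intro x hx y hy
        have hxl : x ∈ revInv l := List.mem_of_mem_getLast? hx
        have hgl : x.1 = q.1 := by
          have : (revInv l).getLast? = some ⟨q.1, q.2⁻¹⟩ := by
            rw [VTG.revInv, List.getLast?_map, hldef]
            rw [List.getLast?_reverse]
            rfl
          rw [this, Option.mem_def, Option.some.injEq] at hx
          subst hx
          rfl
        simp only [List.head?_cons, Option.mem_def, Option.some.injEq] at hy
        subst hy
        simpa [hgl] using hq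
    · intro p hp
      rcases List.mem_append.1 hp with hp | hp
      · exact hl.revInv.2 p hp
      · rcases List.mem_cons.1 hp with rfl | hp
        · exact hx'
        · exact hl.2 p hp
  have hprod : mprod φ (revInv l ++ ⟨i₀, x'⟩ :: l) =
      (mprod φ l)⁻¹ * of (φ := φ) i₀ x' * mprod φ l := by
    simp [mprod_append, mprod_revInv, mprod_cons, mul_assoc]
  have hlen2 : (revInv l ++ ⟨i₀, x'⟩ :: l).length = 2 * l.length + 1 := by
    simp [VTG.revInv]
    omega
  have hl1 : l.length = rest.length + 1 := by rw [hldef]; rfl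
  have := alt_prod_mem_of_range hφ i₀ haltL (by rw [hprod]; exact hmem)
  rcases this with h1 | ⟨a, h2⟩
  · rw [h1] at hlen2
    simp [hl1] at hlen2
  · rw [h2] at hlen2
    simp [hl1] at hlen2

def Dec (φ : ∀ i, H →* G i) (g : PushoutI φ) : Prop :=
  (∃ (i : ι) (a : G i), g = of (φ := φ) i a) ∨
    (∃ l, Alt φ l ∧ 2 ≤ l.length ∧ mprod φ l = g)

lemma Dec.ofList (i : ι) {l : List (Σ i, G i)} (hl : Alt φ l) : Dec φ (mprod φ l) := by
  rcases l with _ | ⟨p, rest⟩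
  · exact Or.inl ⟨i, 1, by simp [mprod_nil]⟩
  rcases rest with _ | ⟨q, rest'⟩
  · exact Or.inl ⟨p.1, p.2, by simp [mprod_cons, mprod_nil]⟩
  · exact Or.inr ⟨_, hl, by simp, rfl⟩

lemma Dec.of_mul {i : ι} {a : G i} {y : PushoutI φ} (hy : Dec φ y) :
    Dec φ (of (φ := φ) i a * y) := by
  rcases hy with ⟨j, b, rfl⟩ | ⟨l, hAlt, hlen, rfl⟩
  · by_cases hij : i = j
    · subst hij
      exact Or.inl ⟨i, a * b, by rw [map_mul]⟩
    · by_cases har : a ∈ (φ i).range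
      · rcases har with ⟨h, rfl⟩
        refine Or.inl ⟨j, φ j h * b, ?_⟩
        rw [map_mul, of_apply_eq_base, of_apply_eq_base]
      · by_cases hbr : b ∈ (φ j).range
        · rcases hbr with ⟨h, rfl⟩
          refine Or.inl ⟨i, a * φ i h, ?_⟩
          rw [map_mul, of_apply_eq_base, of_apply_eq_base]
        · have : of (φ := φ) i a * of (φ := φ) j b = mprod φ [⟨i, a⟩, ⟨j, b⟩] := by
            simp [mprod_cons, mprod_nil]
          rw [this]
          exact Or.inr ⟨_, ⟨List.isChain_cons_cons.2 ⟨hij, List.isChain_singleton _⟩, by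
            intro p hp
            rcases List.mem_cons.1 hp with rfl | hp
            · exact har
            · rcases List.mem_cons.1 hp with rfl | hp
              · exact hbr
              · simp at hp⟩, by simp, rfl⟩
  · rcases l with _ | ⟨⟨j, b⟩, rest⟩
    · simp at hlen
    have hbr : b ∉ (φ j).range := hAlt.2 ⟨j, b⟩ List.mem_cons_self
    by_cases hij : i = j
    · subst hij
      rcases rest with _ | ⟨⟨k, c⟩, rest₂⟩
      · simp at hlen
      have hik : i ≠ k := (List.isChain_cons_cons.1 hAlt.1).1
      have hcr : c ∉ (φ k).range := hAlt.2 ⟨k, c⟩ (by simp)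
      by_cases hr : a * b ∈ (φ i).range
      · rcases hr with ⟨h, hh⟩
        have key : of (φ := φ) i a * mprod φ (⟨i, b⟩ :: ⟨k, c⟩ :: rest₂) =
            mprod φ (⟨k, φ k h * c⟩ :: rest₂) := by
          rw [mprod_cons, mprod_cons, mprod_cons, ← mul_assoc, ← map_mul, ← hh,
            of_apply_eq_base, ← mul_assoc, ← of_apply_eq_base φ k, ← map_mul]
        rw [key]
        refine Dec.ofList i ⟨?_, ?_⟩
        · have hch := List.isChain_cons.1 hAlt.1.tail
          exact List.isChain_cons.2 ⟨fun b hb => hch.1 b hb, hch.2⟩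
        · intro p hp
          rcases List.mem_cons.1 hp with rfl | hp
          · exact mul_notin_range_left hcr h
          · exact hAlt.tail.tail.2 p hp
      · have key : of (φ := φ) i a * mprod φ (⟨i, b⟩ :: ⟨k, c⟩ :: rest₂) =
            mprod φ (⟨i, a * b⟩ :: ⟨k, c⟩ :: rest₂) := by
          simp [mprod_cons, map_mul, mul_assoc]
        rw [key]
        refine Dec.ofList i ⟨List.isChain_cons_cons.2 ⟨hik, hAlt.1.tail⟩, ?_⟩
        intro p hp
        rcases List.mem_cons.1 hp with rfl | hp
        · exact hr
        · exact hAlt.tail.2 p hp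
    · by_cases har : a ∈ (φ i).range
      · rcases har with ⟨h, rfl⟩
        have key : of (φ := φ) i (φ i h) * mprod φ (⟨j, b⟩ :: rest) =
            mprod φ (⟨j, φ j h * b⟩ :: rest) := by
          rw [mprod_cons, mprod_cons, ← mul_assoc, of_apply_eq_base, ← of_apply_eq_base φ j,
            ← map_mul]
        rw [key]
        refine Dec.ofList i ⟨?_, ?_⟩
        · have hch := List.isChain_cons.1 hAlt.1
          exact List.isChain_cons.2 ⟨fun b hb => hch.1 b hb, hch.2⟩
        · intro p hp
          rcases List.mem_cons.1 hp with rfl | hp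
          · exact mul_notin_range_left hbr h
          · exact hAlt.tail.2 p hp
      · have key : of (φ := φ) i a * mprod φ (⟨j, b⟩ :: rest) =
            mprod φ (⟨i, a⟩ :: ⟨j, b⟩ :: rest) := by
          simp [mprod_cons, mul_assoc]
        rw [key]
        refine Dec.ofList i ⟨hAlt.1.cons ?_, ?_⟩
        · intro p hp
          simp only [List.head?_cons, Option.mem_def, Option.some.injEq] at hp
          subst hp
          exact hij
        · intro p hp
          rcases List.mem_cons.1 hp with rfl | hp
          · exact har
          · exact hAlt.2 p hp

lemma dec_all [Nonempty ι] (g : PushoutI φ) : Dec φ g := by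
  have key : ∀ x : PushoutI φ, ∀ y, Dec φ y → Dec φ (x * y) := by
    intro x
    refine PushoutI.induction_on (motive := fun x => ∀ y, Dec φ y → Dec φ (x * y)) x ?_ ?_ ?_
    · intro i g y hy
      exact Dec.of_mul hy
    · intro h y hy
      obtain ⟨i⟩ := (inferInstance : Nonempty ι)
      rw [← of_apply_eq_base φ i h]
      exact Dec.of_mul hy
    · intro x y hx hy z hz
      rw [mul_assoc]
      exact hx _ (hy _ hz)
  have h1 : Dec φ (1 : PushoutI φ) :=
    Or.inl ⟨Classical.arbitrary ι, 1, (map_one _).symm⟩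
  simpa using key g 1 h1

lemma mem_of_range_of_commute (hφ : ∀ i, Function.Injective (φ i)) [Nonempty ι]
    {i₀ : ι} {x₀ : G i₀}
    (hx : ∀ h : G i₀, h * x₀ * h⁻¹ ∉ (φ i₀).range)
    {g : PushoutI φ} (hg : g * of (φ := φ) i₀ x₀ = of (φ := φ) i₀ x₀ * g) :
    g ∈ (of (φ := φ) i₀).range := by
  have hx0 : x₀ ∉ (φ i₀).range := by simpa using hx 1
  rcases dec_all g with ⟨i, a, rfl⟩ | ⟨l, hAlt, hlen, rfl⟩
  · by_cases hii : i = i₀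
    · subst hii
      exact ⟨a, rfl⟩
    · by_cases har : a ∈ (φ i).range
      · rcases har with ⟨h, rfl⟩
        rw [of_apply_eq_base, ← of_apply_eq_base φ i₀]
        exact ⟨_, rfl⟩
      · exfalso
        have halt1 : Alt φ [⟨i, a⟩] := by
          refine ⟨List.isChain_singleton _, ?_⟩
          intro p hp
          rcases List.mem_cons.1 hp with rfl | hp
          · exact har
          · simp at hp
        refine sandwich_notin hφ i₀ (rest := []) halt1 hii hx0 ⟨x₀, ?_⟩
        have hm : mprod φ [(⟨i, a⟩ : Σ i, G i)] = of (φ := φ) i a := by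
          simp [mprod_cons, mprod_nil]
        rw [hm, mul_assoc, ← hg, ← mul_assoc, inv_mul_cancel, one_mul]
  · rcases l with _ | ⟨⟨i₁, a₁⟩, rest⟩
    · simp at hlen
    exfalso
    by_cases hi₁ : i₁ = i₀
    · subst hi₁
      rcases rest with _ | ⟨q, rest'⟩
      · simp at hlen
      have hq : q.1 ≠ i₁ := fun hh => (List.isChain_cons_cons.1 hAlt.1).1 hh.symm
      have hx' : a₁⁻¹ * x₀ * a₁ ∉ (φ i₁).range := by simpa using hx a₁⁻¹
      refine sandwich_notin hφ i₁ hAlt.tail hq hx' ⟨x₀, ?_⟩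
      have hX : of (φ := φ) i₁ (a₁⁻¹ * x₀ * a₁) =
          (of (φ := φ) i₁ a₁)⁻¹ * of (φ := φ) i₁ x₀ * of (φ := φ) i₁ a₁ := by
        rw [map_mul, map_mul, map_inv]
      rw [hX]
      have hcomm : (of (φ := φ) i₁ a₁ * mprod φ (q :: rest')) * of (φ := φ) i₁ x₀ =
          of (φ := φ) i₁ x₀ * (of (φ := φ) i₁ a₁ * mprod φ (q :: rest')) := by
        simpa [mprod_cons] using hg
      have hre : (mprod φ (q :: rest'))⁻¹ *
            ((of (φ := φ) i₁ a₁)⁻¹ * of (φ := φ) i₁ x₀ * of (φ := φ) i₁ a₁) *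
            mprod φ (q :: rest') =
          (of (φ := φ) i₁ a₁ * mprod φ (q :: rest'))⁻¹ * of (φ := φ) i₁ x₀ *
            (of (φ := φ) i₁ a₁ * mprod φ (q :: rest')) := by
        group
      rw [hre, mul_assoc, ← hcomm, ← mul_assoc, inv_mul_cancel, one_mul]
    · refine sandwich_notin hφ i₀ hAlt hi₁ hx0 ⟨x₀, ?_⟩
      rw [mul_assoc, ← hg, ← mul_assoc, inv_mul_cancel, one_mul]


end Amalgam

section Heis

@[ext] structure Heis where
  a : ℤ
  b : ℤ
  c : ℤ

instance : Mul Heis := ⟨fun x y => ⟨x.a + y.a, x.b + y.b, x.c + y.c + x.a * y.b⟩⟩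
instance : One Heis := ⟨⟨0, 0, 0⟩⟩
instance : Inv Heis := ⟨fun x => ⟨-x.a, -x.b, -x.c + x.a * x.b⟩⟩

@[simp] lemma Heis.mul_a (x y : Heis) : (x * y).a = x.a + y.a := rfl
@[simp] lemma Heis.mul_b (x y : Heis) : (x * y).b = x.b + y.b := rfl
@[simp] lemma Heis.mul_c (x y : Heis) : (x * y).c = x.c + y.c + x.a * y.b := rfl
@[simp] lemma Heis.one_a : (1 : Heis).a = 0 := rfl
@[simp] lemma Heis.one_b : (1 : Heis).b = 0 := rfl
@[simp] lemma Heis.one_c : (1 : Heis).c = 0 := rfl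

instance : Group Heis where
  mul_assoc x y z := by ext <;> simp <;> ring
  one_mul x := by ext <;> simp
  mul_one x := by ext <;> simp
  inv_mul_cancel x := by
    refine Heis.ext ?_ ?_ ?_ <;> show _ = _ <;> simp [Inv.inv] <;> ring

lemma Heis.commute_key {x y : Heis} (h : x * y = y * x) : x.a * y.b = y.a * x.b := by
  have := congrArg Heis.c h
  simp at this
  linarith

/-- the `a`-coordinate as a group hom. -/
def Heis.A : Heis →* Multiplicative ℤ where
  toFun x := Multiplicative.ofAdd x.a
  map_one' := rfl
  map_mul' x y := by simp [Heis.mul_a]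

def Heis.B : Heis →* Multiplicative ℤ where
  toFun x := Multiplicative.ofAdd x.b
  map_one' := rfl
  map_mul' x y := by simp [Heis.mul_b]

def Heis.X : Heis := ⟨1, 0, 0⟩
def Heis.Y : Heis := ⟨0, 1, 0⟩

end Heis

section Raag

/-- generic commutator relations -/
def cRels (α : Type*) (adj : α → α → Prop) : Set (FreeGroup α) :=
  { w | ∃ p q : α, adj p q ∧ w = ⁅FreeGroup.of p, FreeGroup.of q⁆ }

variable {α : Type*} {adj : α → α → Prop}

/-- build a hom out of the RAAG from commuting images -/
def mkHom {G : Type*} [Group G] (f : α → G) (hf : ∀ p q, adj p q → Commute (f p) (f q)) :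
    PresentedGroup (cRels α adj) →* G :=
  PresentedGroup.toGroup (f := f) (by
    rintro r ⟨p, q, hpq, rfl⟩
    rw [map_commutatorElement]
    simp only [FreeGroup.lift_apply_of]
    exact commutatorElement_eq_one_iff_commute.2 (hf p q hpq))

@[simp] lemma mkHom_of {G : Type*} [Group G] (f : α → G)
    (hf : ∀ p q, adj p q → Commute (f p) (f q)) (x : α) :
    mkHom f hf (.of x) = f x :=
  PresentedGroup.toGroup.of _

lemma raag_of_commute {p q : α} (h : adj p q) :
    Commute (PresentedGroup.of (rels := cRels α adj) p) (PresentedGroup.of q) := by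
  have hm : PresentedGroup.mk (cRels α adj) ⁅FreeGroup.of p, FreeGroup.of q⁆ = 1 := by
    apply (QuotientGroup.eq_one_iff _).2
    exact Subgroup.subset_normalClosure ⟨p, q, h, rfl⟩
  rw [map_commutatorElement] at hm
  exact commutatorElement_eq_one_iff_commute.1 hm

end Raag

section PVT

open PresentedGroup
open scoped Classical

variable {n : ℕ}

/-- adjacency on a subset of vertices -/
abbrev SAdj (S : Set (Vtx n)) : S → S → Prop := fun p q => DisjV p.1 q.1

/-- the RAAG on the full graph -/
abbrev PGr (n : ℕ) := PresentedGroup (cRels (Vtx n) DisjV)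

/-- the RAAG on an induced subgraph -/
abbrev SG (S : Set (Vtx n)) := PresentedGroup (cRels S (SAdj S))

lemma DisjV.symm {p q : Vtx n} (h : DisjV p q) : DisjV q p :=
  ⟨h.1.symm, h.2.2.1.symm, h.2.1.symm, h.2.2.2.symm⟩

lemma DisjV.irrefl (p : Vtx n) : ¬ DisjV p p := fun h => h.1 rfl

noncomputable def nuS (S : Set (Vtx n)) : SG S →* PGr n :=
  mkHom (fun p => PresentedGroup.of p.1) (fun p q h => raag_of_commute h)

noncomputable def resS (S : Set (Vtx n)) : PGr n →* SG S :=
  mkHom (fun v => if h : v ∈ S then PresentedGroup.of ⟨v, h⟩ else 1) (by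
    intro p q hpq
    by_cases hp : p ∈ S
    · by_cases hq : q ∈ S
      · simpa [hp, hq] using raag_of_commute (adj := SAdj S) (p := ⟨p, hp⟩) (q := ⟨q, hq⟩) hpq
      · simp [hq, Commute.one_right]
    · simp [hp, Commute.one_left])

noncomputable def indS {S T : Set (Vtx n)} (h : S ⊆ T) : SG S →* SG T :=
  mkHom (fun p => PresentedGroup.of ⟨p.1, h p.2⟩) (fun p q hpq => raag_of_commute hpq)

@[simp] lemma indS_of {S T : Set (Vtx n)} (h : S ⊆ T) (p : S) :
    indS (n := n) h (PresentedGroup.of p) = PresentedGroup.of ⟨p.1, h p.2⟩ :=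
  mkHom_of _ _ _

@[simp] lemma resS_of {S : Set (Vtx n)} (v : Vtx n) :
    resS S (PresentedGroup.of v) =
      if h : v ∈ S then PresentedGroup.of ⟨v, h⟩ else 1 :=
  mkHom_of _ _ _

noncomputable def retr (S : Set (Vtx n)) : PGr n →* PGr n :=
  mkHom (fun v => if v ∈ S then PresentedGroup.of v else 1) (by
    intro p q hpq
    by_cases hp : p ∈ S
    · by_cases hq : q ∈ S
      · simpa [hp, hq] using raag_of_commute hpq
      · simp [hq, Commute.one_right]
    · simp [hp, Commute.one_left])

@[simp] lemma retr_of {S : Set (Vtx n)} {v : Vtx n} :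
    retr S (PresentedGroup.of v) = if v ∈ S then PresentedGroup.of v else 1 := by
  simp [retr]

@[simp] lemma nuS_of {S : Set (Vtx n)} {p : S} :
    nuS S (PresentedGroup.of p) = PresentedGroup.of p.1 := by
  simp [nuS]

/-- the subgroup generated by a set of vertices -/
def GS (S : Set (Vtx n)) : Subgroup (PGr n) :=
  Subgroup.closure (PresentedGroup.of '' S)

lemma GS_eq_range (S : Set (Vtx n)) : GS S = (nuS S).range := by
  rw [MonoidHom.range_eq_map, ← PresentedGroup.closure_range_of (cRels S (SAdj S)),
    MonoidHom.map_closure, GS]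
  congr 1
  ext g
  simp only [Set.mem_image, Set.mem_range]
  constructor
  · rintro ⟨v, hv, rfl⟩
    exact ⟨_, ⟨⟨v, hv⟩, rfl⟩, by simp⟩
  · rintro ⟨_, ⟨p, rfl⟩, rfl⟩
    exact ⟨p.1, p.2, by simp⟩

lemma of_mem_GS {S : Set (Vtx n)} {v : Vtx n} (h : v ∈ S) :
    PresentedGroup.of v ∈ GS S :=
  Subgroup.subset_closure ⟨v, h, rfl⟩

lemma GS_mono {S T : Set (Vtx n)} (h : S ⊆ T) : GS S ≤ GS T :=
  Subgroup.closure_mono (Set.image_mono h)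

lemma retr_fix {S : Set (Vtx n)} {g : PGr n} (hg : g ∈ GS S) : retr S g = g := by
  induction hg using Subgroup.closure_induction with
  | mem x hx => rcases hx with ⟨v, hv, rfl⟩; simp [hv]
  | one => simp
  | mul x y hx hy ihx ihy => simp [map_mul, ihx, ihy]
  | inv x hx ihx => simp [map_inv, ihx]

lemma retr_mem_GS (S : Set (Vtx n)) (g : PGr n) : retr S g ∈ GS S := by
  have : ∀ x : PGr n, x ∈ (GS S).comap (retr S) := by
    intro x
    apply PresentedGroup.generated_by
    intro v
    simp only [Subgroup.mem_comap, retr_of]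
    split_ifs with h
    · exact of_mem_GS h
    · exact one_mem _
  exact this g

lemma retr_GS {S T : Set (Vtx n)} {g : PGr n} (hg : g ∈ GS S) :
    retr T g ∈ GS (S ∩ T) := by
  induction hg using Subgroup.closure_induction with
  | mem x hx =>
      rcases hx with ⟨v, hv, rfl⟩
      rw [retr_of]
      split_ifs with h
      · exact of_mem_GS ⟨hv, h⟩
      · exact one_mem _
  | one => rw [map_one]; exact one_mem _
  | mul x y hx hy ihx ihy => rw [map_mul]; exact mul_mem ihx ihy
  | inv x hx ihx => rw [map_inv]; exact inv_mem ihx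

lemma mem_GS_of_retr_eq {T : Set (Vtx n)} {g : PGr n} (h : retr T g = g) : g ∈ GS T :=
  h ▸ retr_mem_GS T g

lemma retr_retr {S T : Set (Vtx n)} (g : PGr n) :
    retr S (retr T g) = retr (T ∩ S) g := by
  have : (retr S).comp (retr T) = retr (T ∩ S) := by
    apply PresentedGroup.ext
    intro v
    simp only [MonoidHom.comp_apply, retr_of]
    by_cases hT : v ∈ T
    · by_cases hS : v ∈ S <;> simp [hT, hS, Set.mem_inter_iff]
    · simp [hT, fun (h : v ∈ T ∩ S) => hT h.1]
  exact DFunLike.congr_fun this g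

/-- exponent-sum homomorphisms -/
noncomputable def psi (u : Vtx n) : PGr n →* Multiplicative ℤ :=
  mkHom (fun v => Multiplicative.ofAdd (if v = u then 1 else 0)) (fun _ _ _ => Commute.all _ _)

@[simp] lemma psi_of {u v : Vtx n} :
    psi u (PresentedGroup.of v) = Multiplicative.ofAdd (if v = u then 1 else 0) := by
  simp [psi]

lemma psi_GS_eq_one {S : Set (Vtx n)} {u : Vtx n} (hu : u ∉ S) {g : PGr n}
    (hg : g ∈ GS S) : psi u g = 1 := by
  induction hg using Subgroup.closure_induction with
  | mem x hx =>
      rcases hx with ⟨v, hv, rfl⟩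
      have : v ≠ u := fun h => hu (h ▸ hv)
      simp [this]
  | one => simp
  | mul x y hx hy ihx ihy => simp [map_mul, ihx, ihy]
  | inv x hx ihx => simp [map_inv, ihx]

lemma psi_retr {S : Set (Vtx n)} {u : Vtx n} (hu : u ∈ S) (g : PGr n) :
    psi u (retr S g) = psi u g := by
  have : (psi u).comp (retr S) = psi u := by
    apply PresentedGroup.ext
    intro v
    simp only [MonoidHom.comp_apply, retr_of]
    split_ifs with h
    · simp
    · have : v ≠ u := fun hh => h (hh ▸ hu)
      simp [this]
  exact DFunLike.congr_fun this g

end PVT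

section Probe

variable {n : ℕ}

/-- the exponent-sum of `u` in `g`, as an integer -/
noncomputable def psiZ (u : Vtx n) (g : PGr n) : ℤ := Multiplicative.toAdd (psi u g)

lemma psiZ_mul (u : Vtx n) (x y : PGr n) : psiZ u (x * y) = psiZ u x + psiZ u y := by
  simp [psiZ, map_mul]

@[simp] lemma psiZ_of_self (u : Vtx n) : psiZ u (PresentedGroup.of u) = 1 := by
  simp [psiZ]

@[simp] lemma psiZ_of_ne {u v : Vtx n} (h : v ≠ u) : psiZ u (PresentedGroup.of v) = 0 := by
  simp [psiZ, h]

lemma psiZ_zpow (u w : Vtx n) (k : ℤ) :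
    psiZ u (PresentedGroup.of w ^ k) = k * psiZ u (PresentedGroup.of w) := by
  simp [psiZ, map_zpow]

lemma psiZ_GS_eq_zero {S : Set (Vtx n)} {u : Vtx n} (hu : u ∉ S) {g : PGr n}
    (hg : g ∈ GS S) : psiZ u g = 0 := by
  simp [psiZ, psi_GS_eq_one hu hg]

noncomputable def probe (v w : Vtx n) (h : ¬ DisjV v w) : PGr n →* Heis :=
  mkHom (fun u => if u = v then Heis.X else if u = w then Heis.Y else 1)
    (by
      intro p q hpq
      by_cases hpv : p = v
      · subst hpv
        have hqp : q ≠ p := fun hh => DisjV.irrefl p (hh ▸ hpq)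
        have hqw : q ≠ w := fun hh => h (hh ▸ hpq)
        simp only [if_neg hqp, if_neg hqw]
        exact Commute.one_right _
      · by_cases hpw : p = w
        · subst hpw
          have hqp : q ≠ p := fun hh => DisjV.irrefl p (hh ▸ hpq)
          have hqv : q ≠ v := fun hh => h (DisjV.symm (hh ▸ hpq))
          simp only [if_neg hqp, if_neg hqv, if_neg hpv]
          exact Commute.one_right _
        · simp only [if_neg hpv, if_neg hpw]
          exact Commute.one_left _)

lemma probe_a {v w : Vtx n} (hnd : ¬ DisjV v w) (hvw : v ≠ w) (g : PGr n) :
    (probe v w hnd g).a = psiZ v g := by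
  have : Heis.A.comp (probe v w hnd) = psi v := by
    apply PresentedGroup.ext
    intro u
    simp only [MonoidHom.comp_apply, probe, mkHom_of, psi_of]
    by_cases huv : u = v
    · simp [huv, Heis.A, Heis.X]
    · by_cases huw : u = w
      · have hwv : ¬ (w = v) := fun hh => hvw hh.symm
        simp [huv, huw, hwv, Heis.A, Heis.Y]
      · simp [huv, huw, Heis.A]
  have h2 := DFunLike.congr_fun this g
  simpa [psiZ, Heis.A] using congrArg Multiplicative.toAdd h2

lemma probe_b {v w : Vtx n} (hnd : ¬ DisjV v w) (hvw : v ≠ w) (g : PGr n) :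
    (probe v w hnd g).b = psiZ w g := by
  have : Heis.B.comp (probe v w hnd) = psi w := by
    apply PresentedGroup.ext
    intro u
    simp only [MonoidHom.comp_apply, probe, mkHom_of, psi_of]
    by_cases huv : u = v
    · subst huv
      simp [Heis.B, Heis.X, if_neg hvw]
    · by_cases huw : u = w
      · have hwv : ¬ (w = v) := fun hh => hvw hh.symm
        simp [huv, huw, hwv, Heis.B, Heis.Y]
      · simp [huv, huw, Heis.B]
  have h2 := DFunLike.congr_fun this g
  simpa [psiZ, Heis.B] using congrArg Multiplicative.toAdd h2

/-- the key probe relation : if `x` and `y` commute and `v,w` are two distinct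
vertices sharing an index, then the 2x2 exponent matrix is degenerate. -/
lemma psi_comm_rel {v w : Vtx n} (hnd : ¬ DisjV v w) (hvw : v ≠ w) {x y : PGr n}
    (hxy : x * y = y * x) :
    psiZ v x * psiZ w y = psiZ v y * psiZ w x := by
  have hcomm : probe v w hnd x * probe v w hnd y = probe v w hnd y * probe v w hnd x := by
    rw [← map_mul, hxy, map_mul]
  have := Heis.commute_key hcomm
  rwa [probe_a hnd hvw, probe_a hnd hvw, probe_b hnd hvw, probe_b hnd hvw] at this

end Probe

section StarLink

variable {n : ℕ}

/-- the link of a vertex : all vertices disjoint from it -/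
def lk (w : Vtx n) : Set (Vtx n) := {u | DisjV u w}

/-- the star of a vertex -/
def st (w : Vtx n) : Set (Vtx n) := insert w (lk w)

lemma notin_lk (w : Vtx n) : w ∉ lk w := DisjV.irrefl w

lemma lk_subset_st (w : Vtx n) : lk w ⊆ st w := Set.subset_insert _ _

lemma mem_st_self (w : Vtx n) : w ∈ st w := Set.mem_insert _ _

lemma lk_subset_ne (w : Vtx n) : lk w ⊆ {u | u ≠ w} := by
  intro u hu hh
  exact DisjV.irrefl w (hh ▸ hu)

lemma link_commute {w : Vtx n} {c : PGr n} (hc : c ∈ GS (lk w)) :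
    Commute (PresentedGroup.of w) c := by
  induction hc using Subgroup.closure_induction with
  | mem x hx =>
      rcases hx with ⟨u, hu, rfl⟩
      exact Commute.symm (raag_of_commute (adj := DisjV) (p := u) (q := w) hu)
  | one => exact Commute.one_right _
  | mul x y hx hy ihx ihy => exact ihx.mul_right ihy
  | inv x hx ihx => exact ihx.inv_right

lemma star_decomp {w : Vtx n} {g : PGr n} (hg : g ∈ GS (st w)) :
    ∃ (k : ℤ) (c : PGr n), c ∈ GS (lk w) ∧ g = PresentedGroup.of w ^ k * c := by
  induction hg using Subgroup.closure_induction with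
  | mem x hx =>
      rcases hx with ⟨u, hu, rfl⟩
      rcases Set.mem_insert_iff.1 hu with rfl | hu
      · exact ⟨1, 1, one_mem _, by simp⟩
      · exact ⟨0, PresentedGroup.of u, of_mem_GS hu, by simp⟩
  | one => exact ⟨0, 1, one_mem _, by simp⟩
  | mul x y hx hy ihx ihy =>
      rcases ihx with ⟨k, c, hc, rfl⟩
      rcases ihy with ⟨k', c', hc', rfl⟩
      refine ⟨k + k', c * c', mul_mem hc hc', ?_⟩
      have hcom : Commute c (PresentedGroup.of w ^ k') := ((link_commute hc).zpow_left k').symm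
      rw [zpow_add]
      calc PresentedGroup.of w ^ k * c * (PresentedGroup.of w ^ k' * c')
          = PresentedGroup.of w ^ k * (c * PresentedGroup.of w ^ k') * c' := by group
        _ = PresentedGroup.of w ^ k * (PresentedGroup.of w ^ k' * c) * c' := by rw [hcom.eq]
        _ = PresentedGroup.of w ^ k * PresentedGroup.of w ^ k' * (c * c') := by group
  | inv x hx ihx =>
      rcases ihx with ⟨k, c, hc, rfl⟩
      refine ⟨-k, c⁻¹, inv_mem hc, ?_⟩
      have hcom : Commute (PresentedGroup.of w ^ (-k)) c⁻¹ :=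
        ((link_commute hc).zpow_left (-k)).inv_right
      rw [mul_inv_rev, ← zpow_neg]
      exact hcom.eq.symm

lemma psiZ_star_decomp {w : Vtx n} {k : ℤ} {c : PGr n} (hc : c ∈ GS (lk w)) :
    psiZ w (PresentedGroup.of w ^ k * c) = k := by
  rw [psiZ_mul, psiZ_zpow, psiZ_GS_eq_zero (notin_lk w) hc, psiZ_of_self]
  ring

end StarLink

section SL

variable {n : ℕ}

@[reducible] def Fac (w : Vtx n) : Bool → Type := fun b =>
  Bool.rec (SG (st w)) (SG {u : Vtx n | u ≠ w}) b

instance instGroupFac (w : Vtx n) : (b : Bool) → Group (Fac w b) := fun b =>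
  Bool.rec (inferInstanceAs (Group (SG (st w))))
    (inferInstanceAs (Group (SG {u : Vtx n | u ≠ w}))) b

@[reducible] noncomputable def fphi (w : Vtx n) : (b : Bool) → (SG (lk w) →* Fac w b) :=
  fun b => Bool.rec (indS (lk_subset_st w)) (indS (lk_subset_ne w)) b

lemma ne_w_of_mem_lk {w : Vtx n} (p : lk w) : p.1 ≠ w :=
  fun hh => notin_lk w ((congrArg (· ∈ lk w) hh).mp p.2)

@[simp] lemma fphi_false_of (w : Vtx n) (p : lk w) :
    fphi w false (PresentedGroup.of p) =
      (PresentedGroup.of ⟨p.1, lk_subset_st w p.2⟩ : SG (st w)) :=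
  mkHom_of _ _ _

@[simp] lemma fphi_true_of (w : Vtx n) (p : lk w) :
    fphi w true (PresentedGroup.of p) =
      (PresentedGroup.of ⟨p.1, lk_subset_ne w p.2⟩ : SG {u : Vtx n | u ≠ w}) :=
  mkHom_of _ _ _

noncomputable def backS (S T : Set (Vtx n)) : SG T →* SG S :=
  mkHom (fun p => if h : p.1 ∈ S then PresentedGroup.of ⟨p.1, h⟩ else 1) (by
    intro p q hpq
    by_cases hp : p.1 ∈ S
    · by_cases hq : q.1 ∈ S
      · simpa [hp, hq] using
          raag_of_commute (adj := SAdj S) (p := ⟨p.1, hp⟩) (q := ⟨q.1, hq⟩) hpq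
      · simp only [dif_neg hq]
        exact Commute.one_right _
    · simp only [dif_neg hp]
      exact Commute.one_left _)

@[simp] lemma backS_of {S T : Set (Vtx n)} (p : T) :
    backS S T (PresentedGroup.of p) =
      if h : p.1 ∈ S then PresentedGroup.of ⟨p.1, h⟩ else 1 :=
  mkHom_of _ _ _

lemma indS_injective {S T : Set (Vtx n)} (h : S ⊆ T) :
    Function.Injective (indS (n := n) h) := by
  have key : (backS S T).comp (indS h) = MonoidHom.id _ := by
    apply PresentedGroup.ext
    intro p
    simp [dif_pos p.2]
  intro x y hxy
  have hx := DFunLike.congr_fun key x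
  have hy := DFunLike.congr_fun key y
  simp only [MonoidHom.comp_apply, MonoidHom.id_apply] at hx hy
  rw [← hx, ← hy, hxy]

lemma fphi_injective (w : Vtx n) : ∀ b, Function.Injective (fphi w b) := by
  intro b
  cases b
  · exact indS_injective (lk_subset_st w)
  · exact indS_injective (lk_subset_ne w)

noncomputable def PsiH (w : Vtx n) : PushoutI (fphi w) →* PGr n :=
  PushoutI.lift
    (fun b => match b with
      | false => nuS (st w)
      | true => nuS {u : Vtx n | u ≠ w})
    (nuS (lk w)) (by
      intro b
      cases b
      · apply PresentedGroup.ext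
        intro p
        rw [MonoidHom.comp_apply, fphi_false_of, nuS_of, nuS_of]
      · apply PresentedGroup.ext
        intro p
        rw [MonoidHom.comp_apply, fphi_true_of, nuS_of, nuS_of])

@[simp] lemma PsiH_of_false (w : Vtx n) (x : SG (st w)) :
    PsiH w (PushoutI.of (φ := fphi w) false x) = nuS (st w) x :=
  PushoutI.lift_of _ _ _ _

@[simp] lemma PsiH_of_true (w : Vtx n) (x : SG {u : Vtx n | u ≠ w}) :
    PsiH w (PushoutI.of (φ := fphi w) true x) = nuS {u : Vtx n | u ≠ w} x :=
  PushoutI.lift_of _ _ _ _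

lemma ofTrue_eq_ofFalse (w : Vtx n) {u : Vtx n} (hu : u ∈ lk w) :
    PushoutI.of (φ := fphi w) true (PresentedGroup.of ⟨u, lk_subset_ne w hu⟩) =
    PushoutI.of (φ := fphi w) false (PresentedGroup.of ⟨u, lk_subset_st w hu⟩) := by
  have h1 : (PresentedGroup.of ⟨u, lk_subset_ne w hu⟩ : SG {u : Vtx n | u ≠ w}) =
      fphi w true (PresentedGroup.of ⟨u, hu⟩) := (fphi_true_of w ⟨u, hu⟩).symm
  have h2 : (PresentedGroup.of ⟨u, lk_subset_st w hu⟩ : SG (st w)) =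
      fphi w false (PresentedGroup.of ⟨u, hu⟩) := (fphi_false_of w ⟨u, hu⟩).symm
  rw [h1, h2, PushoutI.of_apply_eq_base, PushoutI.of_apply_eq_base]

noncomputable def phiFun (w : Vtx n) (v : Vtx n) : PushoutI (fphi w) :=
  if h : v = w then PushoutI.of (φ := fphi w) false (PresentedGroup.of ⟨w, mem_st_self w⟩)
  else PushoutI.of (φ := fphi w) true (PresentedGroup.of ⟨v, h⟩)

lemma phiFun_self (w : Vtx n) :
    phiFun w w = PushoutI.of (φ := fphi w) false (PresentedGroup.of ⟨w, mem_st_self w⟩) :=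
  dif_pos rfl

lemma phiFun_ne {w v : Vtx n} (h : v ≠ w) :
    phiFun w v = PushoutI.of (φ := fphi w) true (PresentedGroup.of ⟨v, h⟩) :=
  dif_neg h

noncomputable def PhiH (w : Vtx n) : PGr n →* PushoutI (fphi w) :=
  mkHom (phiFun w) (by
    intro p q hpq
    by_cases hp : p = w
    · subst hp
      have hq : q ≠ p := fun hh => DisjV.irrefl p (hh ▸ hpq)
      have hqlk : q ∈ lk p := DisjV.symm hpq
      rw [phiFun_self, phiFun_ne hq, ofTrue_eq_ofFalse p hqlk]
      exact (raag_of_commute (adj := SAdj (st p)) (p := ⟨p, mem_st_self p⟩)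
        (q := ⟨q, lk_subset_st p hqlk⟩) hpq).map _
    · by_cases hq : q = w
      · subst hq
        have hplk : p ∈ lk q := hpq
        rw [phiFun_self, phiFun_ne hp, ofTrue_eq_ofFalse q hplk]
        exact ((raag_of_commute (adj := SAdj (st q)) (p := ⟨q, mem_st_self q⟩)
          (q := ⟨p, lk_subset_st q hplk⟩) (DisjV.symm hpq)).map _).symm
      · rw [phiFun_ne hp, phiFun_ne hq]
        exact (raag_of_commute (adj := SAdj {u : Vtx n | u ≠ w})
          (p := ⟨p, hp⟩) (q := ⟨q, hq⟩) hpq).map _)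

@[simp] lemma PhiH_of (w v : Vtx n) : PhiH w (PresentedGroup.of v) = phiFun w v :=
  mkHom_of _ _ _

lemma PsiPhi (w : Vtx n) (g : PGr n) : PsiH w (PhiH w g) = g := by
  have key : (PsiH w).comp (PhiH w) = MonoidHom.id _ := by
    apply PresentedGroup.ext
    intro v
    by_cases hv : v = w
    · subst hv
      rw [MonoidHom.comp_apply, PhiH_of, phiFun_self, PsiH_of_false, nuS_of,
        MonoidHom.id_apply]
    · rw [MonoidHom.comp_apply, PhiH_of, phiFun_ne hv, PsiH_of_true, nuS_of,
        MonoidHom.id_apply]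
  simpa using DFunLike.congr_fun key g

lemma PhiH_nu (w : Vtx n) (d : SG (lk w)) :
    PhiH w (nuS (lk w) d) = PushoutI.of (φ := fphi w) false (fphi w false d) := by
  have key : (PhiH w).comp (nuS (lk w)) =
      (PushoutI.of (φ := fphi w) false).comp (fphi w false) := by
    apply PresentedGroup.ext
    intro p
    have hne : p.1 ≠ w := ne_w_of_mem_lk p
    rw [MonoidHom.comp_apply, MonoidHom.comp_apply, nuS_of, PhiH_of, phiFun_ne hne]
    have hmm : (⟨p.1, hne⟩ : {u : Vtx n | u ≠ w}) = ⟨p.1, lk_subset_ne w p.2⟩ := rfl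
    rw [hmm, ofTrue_eq_ofFalse w p.2]
    simp
  exact DFunLike.congr_fun key d

noncomputable def zeta (w : Vtx n) : SG (st w) →* Multiplicative ℤ :=
  mkHom (fun p => Multiplicative.ofAdd (if p.1 = w then 1 else 0))
    (fun _ _ _ => Commute.all _ _)

@[simp] lemma zeta_of (w : Vtx n) (p : st w) :
    zeta w (PresentedGroup.of p) = Multiplicative.ofAdd (if p.1 = w then 1 else 0) :=
  mkHom_of _ _ _

lemma zeta_fphi (w : Vtx n) (d : SG (lk w)) : zeta w (fphi w false d) = 1 := by
  have key : (zeta w).comp (fphi w false) = 1 := by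
    apply PresentedGroup.ext
    intro p
    have hne : p.1 ≠ w := ne_w_of_mem_lk p
    rw [MonoidHom.comp_apply, fphi_false_of, zeta_of]
    simp [hne]
  simpa using DFunLike.congr_fun key d

/-- Servatius-type lemma : anything commuting with `w·δ`, `δ` in the link of `w`,
lies in the subgroup generated by the star of `w`. -/
lemma SL {w : Vtx n} {δ g : PGr n} (hδ : δ ∈ GS (lk w))
    (hc : g * (PresentedGroup.of w * δ) = (PresentedGroup.of w * δ) * g) :
    g ∈ GS (st w) := by
  rw [GS_eq_range] at hδ
  obtain ⟨d, rfl⟩ := hδ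
  set x₀ : SG (st w) := PresentedGroup.of ⟨w, mem_st_self w⟩ * fphi w false d with hx₀
  have hzx₀ : zeta w x₀ = Multiplicative.ofAdd 1 := by
    rw [hx₀, map_mul, zeta_fphi, mul_one, zeta_of, if_pos rfl]
  have hP : ∀ h : SG (st w), h * x₀ * h⁻¹ ∉ (fphi w false).range := by
    rintro h ⟨y, hy⟩
    have hz := congrArg (zeta w) hy
    rw [zeta_fphi, map_mul, map_mul, map_inv, hzx₀] at hz
    rw [mul_comm (zeta w h), mul_assoc, mul_inv_cancel, mul_one] at hz
    exact absurd (congrArg Multiplicative.toAdd hz) (by norm_num)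
  have hofw : PhiH w (PresentedGroup.of w) =
      PushoutI.of (φ := fphi w) false (PresentedGroup.of ⟨w, mem_st_self w⟩) := by
    rw [PhiH_of, phiFun_self]
  have hmap : PhiH w (PresentedGroup.of w * nuS (lk w) d) =
      PushoutI.of (φ := fphi w) false x₀ := by
    rw [map_mul, hofw, PhiH_nu, hx₀, map_mul]
  have hcomm : PhiH w g * PushoutI.of (φ := fphi w) false x₀ =
      PushoutI.of (φ := fphi w) false x₀ * PhiH w g := by
    rw [← hmap, ← map_mul, hc, map_mul]
  have hrange := mem_of_range_of_commute (fphi_injective w) hP hcomm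
  rcases hrange with ⟨y, hy⟩
  have hgy : g = nuS (st w) y := by
    rw [← PsiPhi w g, ← hy, PsiH_of_false]
  rw [GS_eq_range, hgy]
  exact ⟨y, rfl⟩

/-- refined version : with vanishing `w`-exponent the element lies in the link subgroup. -/
lemma SL' {w : Vtx n} {δ g : PGr n} (hδ : δ ∈ GS (lk w))
    (hc : g * (PresentedGroup.of w * δ) = (PresentedGroup.of w * δ) * g)
    (hz : psiZ w g = 0) : g ∈ GS (lk w) := by
  obtain ⟨k, c, hcmem, rfl⟩ := star_decomp (SL hδ hc)
  have hk : k = 0 := by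
    have := psiZ_star_decomp (k := k) hcmem
    omega
  subst hk
  simpa using hcmem

end SL

section Graph

variable {n : ℕ}

/-- make a vertex out of two distinct indices -/
def mkV (i j : Fin n) (h : i ≠ j) : Vtx n :=
  if hij : i < j then ⟨(i, j), hij⟩ else ⟨(j, i), h.lt_or_gt.resolve_left hij⟩

def hasIdx (v : Vtx n) (i : Fin n) : Prop := v.1.1 = i ∨ v.1.2 = i

lemma mkV_left (i j : Fin n) (h : i ≠ j) : hasIdx (mkV i j h) i := by
  rw [mkV]
  split_ifs with hij
  · exact Or.inl rfl
  · exact Or.inr rfl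

lemma mkV_right (i j : Fin n) (h : i ≠ j) : hasIdx (mkV i j h) j := by
  rw [mkV]
  split_ifs with hij
  · exact Or.inr rfl
  · exact Or.inl rfl

lemma not_disj_of_common {v w : Vtx n} {i : Fin n} (hv : hasIdx v i) (hw : hasIdx w i) :
    ¬ DisjV v w := by
  intro hd
  rcases hv with h1 | h1 <;> rcases hw with h2 | h2
  · exact hd.1 (h1.trans h2.symm)
  · exact hd.2.1 (h1.trans h2.symm)
  · exact hd.2.2.1 (h1.trans h2.symm)
  · exact hd.2.2.2 (h1.trans h2.symm)

lemma ne_of_idx {v w : Vtx n} {i : Fin n} (hv : hasIdx v i) (hw : ¬ hasIdx w i) :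
    v ≠ w :=
  fun he => hw (he ▸ hv)

lemma exists_third (hn : 3 ≤ n) (a b : Fin n) : ∃ c : Fin n, c ≠ a ∧ c ≠ b := by
  by_contra hcon
  push_neg at hcon
  have hsub : (Finset.univ : Finset (Fin n)) ⊆ {a, b} := by
    intro c _
    by_cases hc : c = a
    · simp [hc]
    · simp [hcon c hc]
  have h1 := Finset.card_le_card hsub
  have h2 : ({a, b} : Finset (Fin n)).card ≤ 2 :=
    (Finset.card_insert_le _ _).trans (by simp)
  rw [Finset.card_univ, Fintype.card_fin] at h1
  omega

/-- every vertex has a sharing partner, `n ≥ 3` -/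
lemma exists_partner (hn : 3 ≤ n) (w : Vtx n) :
    ∃ v : Vtx n, v ≠ w ∧ ¬ DisjV v w := by
  obtain ⟨c, hca, hcb⟩ := exists_third hn w.1.1 w.1.2
  have hne : w.1.1 ≠ c := fun h => hca h.symm
  refine ⟨mkV w.1.1 c hne, ?_, ?_⟩
  · refine ne_of_idx (mkV_right _ _ hne) ?_
    rintro (h | h)
    · exact hca h.symm
    · exact hcb h.symm
  · exact not_disj_of_common (mkV_left _ _ hne) (Or.inl rfl)

/-- any two disjoint vertices have a common sharing partner -/
lemma exists_common (v w : Vtx n) (hd : DisjV v w) :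
    ∃ u : Vtx n, (u ≠ v ∧ ¬ DisjV u v) ∧ (u ≠ w ∧ ¬ DisjV u w) := by
  have hne : v.1.2 ≠ w.1.1 := hd.2.2.1
  refine ⟨mkV v.1.2 w.1.1 hne, ⟨?_, ?_⟩, ?_, ?_⟩
  · refine ne_of_idx (mkV_right _ _ hne) ?_
    rintro (h | h)
    · exact hd.1 h
    · exact hd.2.2.1 h
  · exact not_disj_of_common (mkV_left _ _ hne) (Or.inr rfl)
  · refine ne_of_idx (mkV_left _ _ hne) ?_
    rintro (h | h)
    · exact hd.2.2.1 h.symm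
    · exact hd.2.2.2 h.symm
  · exact not_disj_of_common (mkV_right _ _ hne) (Or.inl rfl)

/-- vertices with both indices in `J` -/
def PJ (J : Finset (Fin n)) : Set (Vtx n) := {v | v.1.1 ∈ J ∧ v.1.2 ∈ J}

lemma lk_eq_PJ (v : Vtx n) :
    lk v = PJ ((Finset.univ.erase v.1.1).erase v.1.2) := by
  ext u
  simp only [lk, PJ, Set.mem_setOf_eq, Finset.mem_erase, Finset.mem_univ, and_true]
  show DisjV u v ↔ _
  unfold DisjV
  tauto

lemma PJ_inter_lk (J : Finset (Fin n)) (w : Vtx n) :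
    PJ J ∩ lk w = PJ ((J.erase w.1.1).erase w.1.2) := by
  ext u
  simp only [PJ, lk, Set.mem_inter_iff, Set.mem_setOf_eq, Finset.mem_erase]
  show _ ∧ DisjV u w ↔ _
  unfold DisjV
  tauto

end Graph

section Erec

variable {n : ℕ}

lemma GS_empty : GS (∅ : Set (Vtx n)) = ⊥ := by
  rw [GS, Set.image_empty, Subgroup.closure_empty]

/-- the recursive annihilation lemma -/
lemma Erec (J : Finset (Fin n)) :
    ∀ z : PGr n, z ∈ GS (PJ J) → (∀ u, psiZ u z = 0) →
    (∀ w ∈ PJ (n := n) J, ∃ δ ∈ GS (PJ J ∩ lk w),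
      z * (PresentedGroup.of w * δ) = (PresentedGroup.of w * δ) * z) →
    z = 1 := by
  induction J using Finset.strongInduction with
  | _ J ih =>
    intro z hz hexp hcomm
    by_cases hPJ : PJ (n := n) J = ∅
    · rw [hPJ, GS_empty, Subgroup.mem_bot] at hz
      exact hz
    · obtain ⟨w, hw⟩ := Set.nonempty_iff_ne_empty.2 hPJ
      obtain ⟨δ, hδ, hcw⟩ := hcomm w hw
      have hδlk : δ ∈ GS (lk w) := GS_mono Set.inter_subset_right hδ
      have hzlk : z ∈ GS (lk w) := SL' hδlk hcw (hexp w)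
      -- z is in the intersection subgroup
      set J₂ : Finset (Fin n) := (J.erase w.1.1).erase w.1.2 with hJ₂
      have hJ₂sub : J₂ ⊂ J :=
        lt_of_le_of_lt (Finset.erase_subset _ _) (Finset.erase_ssubset hw.1)
      have hzfix : retr (PJ J₂) z = z := by
        have h1 : retr (PJ J) z = z := retr_fix hz
        have h2 : retr (lk w) z = z := retr_fix hzlk
        have h3 := retr_retr (S := lk w) (T := PJ J) z
        rw [h1, h2, PJ_inter_lk] at h3
        exact h3.symm
      have hz2 : z ∈ GS (PJ J₂) := mem_GS_of_retr_eq hzfix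
      refine ih J₂ hJ₂sub z hz2 hexp ?_
      intro w' hw'
      have hw'J : w' ∈ PJ (n := n) J := by
        rcases hw' with ⟨h1, h2⟩
        exact ⟨Finset.mem_of_mem_erase (Finset.mem_of_mem_erase h1),
          Finset.mem_of_mem_erase (Finset.mem_of_mem_erase h2)⟩
      obtain ⟨δ', hδ', hcw'⟩ := hcomm w' hw'J
      refine ⟨retr (PJ J₂) δ', ?_, ?_⟩
      · have := retr_GS (T := PJ J₂) hδ'
        refine GS_mono ?_ this
        intro u hu
        exact ⟨hu.2, hu.1.2⟩
      · have := congrArg (retr (PJ J₂)) hcw'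
        rw [map_mul, map_mul, map_mul, map_mul, hzfix] at this
        rwa [retr_of, if_pos hw'] at this

end Erec

section Main

variable {n : ℕ}

/-- main lemma : if some `a`-part has nonzero exponent, then all the `b`-parts vanish. -/
lemma half (hn : 3 ≤ n) (A B : Subgroup (PGr n))
    (hcomm : ∀ a ∈ A, ∀ b ∈ B, a * b = b * a)
    (a b : Vtx n → PGr n) (ha : ∀ v, a v ∈ A) (hb : ∀ v, b v ∈ B)
    (hab : ∀ v, (PresentedGroup.of v : PGr n) = a v * b v)
    (hs : ∃ v₀, psiZ v₀ (a v₀) ≠ 0) :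
    ∀ v, b v = 1 := by
  -- commutation of the parts with the vertex
  have haC : ∀ v, a v * PresentedGroup.of v = PresentedGroup.of v * a v := by
    intro v
    have hba : b v * a v = a v * b v := (hcomm (a v) (ha v) (b v) (hb v)).symm
    rw [hab v, mul_assoc, hba]
  have hbC : ∀ v, b v * PresentedGroup.of v = PresentedGroup.of v * b v := by
    intro v
    have hba : b v * a v = a v * b v := (hcomm (a v) (ha v) (b v) (hb v)).symm
    rw [hab v, ← mul_assoc, hba]
  have hst : ∀ v, psiZ v (a v) + psiZ v (b v) = 1 := by
    intro v
    rw [← psiZ_mul, ← hab v, psiZ_of_self]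
  -- cross exponents vanish
  have hL1a : ∀ v w : Vtx n, ¬ DisjV v w → v ≠ w → psiZ w (a v) = 0 := by
    intro v w hnd hvw
    have := psi_comm_rel hnd hvw (haC v)
    rw [psiZ_of_ne hvw, psiZ_of_self, mul_zero, one_mul] at this
    omega
  have hL1b : ∀ v w : Vtx n, ¬ DisjV v w → v ≠ w → psiZ w (b v) = 0 := by
    intro v w hnd hvw
    have := psi_comm_rel hnd hvw (hbC v)
    rw [psiZ_of_ne hvw, psiZ_of_self, mul_zero, one_mul] at this
    omega
  have hL1b' : ∀ v w : Vtx n, ¬ DisjV v w → v ≠ w → psiZ v (b w) = 0 := by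
    intro v w hnd hvw
    have hnd' : ¬ DisjV w v := fun h => hnd ⟨h.1.symm, h.2.2.1.symm, h.2.1.symm, h.2.2.2.symm⟩
    exact hL1b w v hnd' hvw.symm
  -- degenerate products
  have hL2 : ∀ v w : Vtx n, ¬ DisjV v w → v ≠ w →
      psiZ v (a v) * psiZ w (b w) = 0 := by
    intro v w hnd hvw
    have := psi_comm_rel hnd hvw (hcomm (a v) (ha v) (b w) (hb w))
    rw [hL1b' v w hnd hvw, hL1a v w hnd hvw, zero_mul] at this
    exact this
  -- partition : all the t-exponents vanish
  obtain ⟨v₀, hv₀⟩ := hs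
  have ht : ∀ w, psiZ w (b w) = 0 := by
    have hstep : ∀ w, w ≠ v₀ → ¬ DisjV v₀ w → psiZ w (b w) = 0 := by
      intro w hwv hnd
      have h2 := hL2 v₀ w hnd (fun h => hwv h.symm)
      rcases mul_eq_zero.1 h2 with h | h
      · exact absurd h hv₀
      · exact h
    have hstep2 : ∀ u w : Vtx n, psiZ u (a u) ≠ 0 → u ≠ w → ¬ DisjV u w →
        psiZ w (b w) = 0 := by
      intro u w hsu huw hnd
      have h2 := hL2 u w hnd huw
      rcases mul_eq_zero.1 h2 with h | h
      · exact absurd h hsu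
      · exact h
    intro w
    by_cases hwv : w = v₀
    · obtain ⟨u, hune, hund⟩ := exists_partner hn v₀
      have htu : psiZ u (b u) = 0 :=
        hstep u hune (fun h => hund (DisjV.symm (p := v₀) (q := u) h))
      have hsu : psiZ u (a u) ≠ 0 := by have := hst u; omega
      rw [hwv]
      exact hstep2 u v₀ hsu hune hund
    · by_cases hnd : DisjV v₀ w
      · obtain ⟨u, ⟨hu1, hu2⟩, hu3, hu4⟩ := exists_common v₀ w hnd
        have htu : psiZ u (b u) = 0 :=
          hstep u hu1 (fun h => hu2 (DisjV.symm (p := v₀) (q := u) h))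
        have hsu : psiZ u (a u) ≠ 0 := by have := hst u; omega
        exact hstep2 u w hsu hu3 hu4
      · exact hstep w hwv hnd
  have hsv : ∀ v, psiZ v (a v) = 1 := by
    intro v
    have := hst v
    have := ht v
    omega
  -- every element of B has vanishing exponents
  have hψB : ∀ (w : Vtx n), ∀ g ∈ B, psiZ w g = 0 := by
    intro w g hg
    obtain ⟨v, hvne, hvnd⟩ := exists_partner hn w
    have hcg : g * a v = a v * g := (hcomm (a v) (ha v) g hg).symm
    have := psi_comm_rel hvnd hvne (x := g) (y := a v) hcg
    rw [hL1a v w hvnd hvne] at this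
    rw [hsv v] at this
    simpa using this.symm
  -- each b-part lies in the link subgroup
  have hblk : ∀ w, b w ∈ GS (lk w) := by
    intro w
    have h1 : (1 : PGr n) ∈ GS (lk w) := one_mem _
    have hcw : b w * (PresentedGroup.of w * 1) = (PresentedGroup.of w * 1) * b w := by
      rw [mul_one]
      exact hbC w
    exact SL' h1 hcw (ht w)
  -- kill each b-part by the recursion
  intro v
  set Jv : Finset (Fin n) := (Finset.univ.erase v.1.1).erase v.1.2 with hJv
  have hlkPJ : lk v = PJ Jv := lk_eq_PJ v
  refine Erec Jv (b v) (hlkPJ ▸ hblk v) (fun u => hψB u (b v) (hb v)) ?_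
  intro w hw
  have hwlk : w ∈ lk v := hlkPJ ▸ hw
  have hawd : a w = PresentedGroup.of w * (b w)⁻¹ := by
    rw [hab w]
    group
  have hfixbv : retr (PJ Jv) (b v) = b v := retr_fix (hlkPJ ▸ hblk v)
  refine ⟨(retr (PJ Jv) (b w))⁻¹, ?_, ?_⟩
  · refine inv_mem (GS_mono ?_ (retr_GS (T := PJ Jv) (hblk w)))
    intro u hu
    exact ⟨hu.2, hu.1⟩
  · have hcwv : b v * a w = a w * b v := (hcomm (a w) (ha w) (b v) (hb v)).symm
    have := congrArg (retr (PJ Jv)) hcwv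
    rw [map_mul, map_mul, hfixbv, hawd, map_mul, map_inv, retr_of, if_pos hw] at this
    exact this

theorem main_ge3 (hn : 3 ≤ n) (A B : Subgroup (PGr n))
    (hcomm : ∀ a ∈ A, ∀ b ∈ B, a * b = b * a)
    (hinf : A ⊓ B = ⊥) (hsup : A ⊔ B = ⊤) :
    A = ⊥ ∨ B = ⊥ := by
  -- decomposition of arbitrary elements
  have hdecomp : ∀ g : PGr n, ∃ a ∈ A, ∃ b ∈ B, g = a * b := by
    intro g
    let S : Subgroup (PGr n) :=
      { carrier := {x | ∃ a ∈ A, ∃ b ∈ B, x = a * b}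
        one_mem' := ⟨1, one_mem _, 1, one_mem _, by simp⟩
        mul_mem' := by
          rintro x y ⟨xa, hxa, xb, hxb, rfl⟩ ⟨ya, hya, yb, hyb, rfl⟩
          refine ⟨xa * ya, mul_mem hxa hya, xb * yb, mul_mem hxb hyb, ?_⟩
          have hc : xb * ya = ya * xb := (hcomm ya hya xb hxb).symm
          calc xa * xb * (ya * yb) = xa * (xb * ya) * yb := by group
            _ = xa * (ya * xb) * yb := by rw [hc]
            _ = xa * ya * (xb * yb) := by group
        inv_mem' := by
          rintro x ⟨xa, hxa, xb, hxb, rfl⟩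
          refine ⟨xa⁻¹, inv_mem hxa, xb⁻¹, inv_mem hxb, ?_⟩
          have hc : xa⁻¹ * xb⁻¹ = xb⁻¹ * xa⁻¹ := by
            have := hcomm xa⁻¹ (inv_mem hxa) xb⁻¹ (inv_mem hxb)
            exact this
          rw [mul_inv_rev, hc] }
    have hAS : A ≤ S := fun x hx => ⟨x, hx, 1, one_mem _, by simp⟩
    have hBS : B ≤ S := fun x hx => ⟨1, one_mem _, x, hx, by simp⟩
    have : (⊤ : Subgroup (PGr n)) ≤ S := hsup ▸ sup_le hAS hBS
    exact this (Subgroup.mem_top g)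
  choose a hA b hB hab using fun v : Vtx n => hdecomp (PresentedGroup.of v)
  by_cases hs : ∃ v₀, psiZ v₀ (a v₀) ≠ 0
  · -- all b-parts die, so A = ⊤ and B = ⊥
    have hb1 := half hn A B hcomm a b hA hB hab hs
    have hAtop : A = ⊤ := by
      rw [eq_top_iff]
      intro x _
      refine PresentedGroup.generated_by _ _ ?_ x
      intro v
      have := hab v
      rw [hb1 v, mul_one] at this
      exact this ▸ hA v
    right
    rw [← hinf, hAtop]
    simp
  · -- symmetric case
    push_neg at hs
    have hsb : ∀ v, psiZ v (b v) ≠ 0 := by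
      intro v
      have h1 : psiZ v (a v) + psiZ v (b v) = 1 := by
        rw [← psiZ_mul, ← hab v, psiZ_of_self]
      have := hs v
      omega
    have hab' : ∀ v, (PresentedGroup.of v : PGr n) = b v * a v := by
      intro v
      rw [hab v, hcomm (a v) (hA v) (b v) (hB v)]
    have hcomm' : ∀ x ∈ B, ∀ y ∈ A, x * y = y * x := by
      intro x hx y hy
      exact (hcomm y hy x hx).symm
    have hv0 : ∃ v₀ : Vtx n, psiZ v₀ (b v₀) ≠ 0 := by
      refine ⟨⟨(⟨0, by omega⟩, ⟨1, by omega⟩), ?_⟩, hsb _⟩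
      exact Fin.mk_lt_mk.2 one_pos
    have ha1 := half hn B A hcomm' b a hB hA hab' hv0
    have hBtop : B = ⊤ := by
      rw [eq_top_iff]
      intro x _
      refine PresentedGroup.generated_by _ _ ?_ x
      intro v
      have := hab' v
      rw [ha1 v, mul_one] at this
      exact this ▸ hB v
    left
    rw [← hinf, hBtop]
    simp

end Main

section Ncase2

/-- the unique vertex for `n = 2` -/
lemma vtx2_unique (u v : Vtx 2) : u = v := by
  rcases u with ⟨⟨a, b⟩, hab⟩
  rcases v with ⟨⟨c, d⟩, hcd⟩
  have h1 : (a : ℕ) < b := hab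
  have h2 : (c : ℕ) < d := hcd
  have ha := a.isLt
  have hb := b.isLt
  have hc := c.isLt
  have hd := d.isLt
  simp only [Subtype.mk.injEq, Prod.mk.injEq]
  constructor <;> (apply Fin.ext; omega)

theorem main_eq2 (A B : Subgroup (PGr 2))
    (hcomm : ∀ a ∈ A, ∀ b ∈ B, a * b = b * a)
    (hinf : A ⊓ B = ⊥) (hsup : A ⊔ B = ⊤) :
    A = ⊥ ∨ B = ⊥ := by
  set v₀ : Vtx 2 := ⟨(⟨0, by omega⟩, ⟨1, by omega⟩), Fin.mk_lt_mk.2 one_pos⟩ with hv₀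
  -- psi v₀ is injective
  have hinj : Function.Injective (psi v₀) := by
    set ζ : Multiplicative ℤ →* PGr 2 := zpowersHom (PGr 2) (PresentedGroup.of v₀)
    have key : ζ.comp (psi v₀) = MonoidHom.id _ := by
      apply PresentedGroup.ext
      intro u
      have hu : u = v₀ := vtx2_unique u v₀
      subst hu
      simp [ζ, zpowersHom_apply]
    intro x y hxy
    have hx := DFunLike.congr_fun key x
    have hy := DFunLike.congr_fun key y
    simp only [MonoidHom.comp_apply, MonoidHom.id_apply] at hx hy
    rw [← hx, ← hy, hxy]
  by_contra hcon
  push_neg at hcon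
  obtain ⟨hA, hB⟩ := hcon
  obtain ⟨xs, hx1s⟩ := Subgroup.ne_bot_iff_exists_ne_one.1 hA
  obtain ⟨ys, hy1s⟩ := Subgroup.ne_bot_iff_exists_ne_one.1 hB
  set x : PGr 2 := (xs : PGr 2) with hxdef
  set y : PGr 2 := (ys : PGr 2) with hydef
  have hxA : x ∈ A := xs.2
  have hyB : y ∈ B := ys.2
  have hx1 : x ≠ 1 := fun h => hx1s (OneMemClass.coe_eq_one.1 h)
  have hy1 : y ≠ 1 := fun h => hy1s (OneMemClass.coe_eq_one.1 h)
  set α := psiZ v₀ x with hα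
  set β := psiZ v₀ y with hβ
  have hα0 : α ≠ 0 := by
    intro h
    apply hx1
    apply hinj
    rw [map_one]
    have : psiZ v₀ x = 0 := h
    rw [psiZ] at this
    exact (Multiplicative.toAdd.injective (by simpa using this))
  have hβ0 : β ≠ 0 := by
    intro h
    apply hy1
    apply hinj
    rw [map_one]
    have : psiZ v₀ y = 0 := h
    rw [psiZ] at this
    exact (Multiplicative.toAdd.injective (by simpa using this))
  have hxy : (x : PGr 2) ^ β = (y : PGr 2) ^ α := by
    apply hinj
    rw [map_zpow, map_zpow]
    have h1 : psi v₀ (x : PGr 2) = Multiplicative.ofAdd α := by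
      rw [hα, psiZ]
      simp
    have h2 : psi v₀ (y : PGr 2) = Multiplicative.ofAdd β := by
      rw [hβ, psiZ]
      simp
    rw [h1, h2, ← ofAdd_zsmul, ← ofAdd_zsmul]
    rw [smul_eq_mul, smul_eq_mul, mul_comm]
  have hmem : (x : PGr 2) ^ β ∈ A ⊓ B := by
    constructor
    · exact zpow_mem hxA β
    · rw [hxy]
      exact zpow_mem hyB α
  rw [hinf, Subgroup.mem_bot] at hmem
  have : psi v₀ ((x : PGr 2) ^ β) = 1 := by rw [hmem, map_one]
  rw [map_zpow] at this
  have h1 : psi v₀ (x : PGr 2) = Multiplicative.ofAdd α := by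
    rw [hα, psiZ]
    simp
  rw [h1, ← ofAdd_zsmul, smul_eq_mul] at this
  have := congrArg Multiplicative.toAdd this
  simp at this
  rcases this with h | h
  · exact hα0 h
  · exact hβ0 h

end Ncase2

/-- `PVT_n` is an irreducible right-angled Artin group: it is not an (internal) direct
product of two nontrivial subgroups. -/
theorem pvt_irreducible (n : ℕ) (hn : 2 ≤ n)
    (A B : Subgroup (PresentedGroup (raagRels n)))
    (hcomm : ∀ a ∈ A, ∀ b ∈ B, a * b = b * a)
    (hinf : A ⊓ B = ⊥) (hsup : A ⊔ B = ⊤) :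
    A = ⊥ ∨ B = ⊥ := by
  rcases eq_or_lt_of_le hn with h2 | h3
  · cases h2
    exact main_eq2 A B hcomm hinf hsup
  · exact main_ge3 h3 A B hcomm hinf hsup

end VTG
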